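/- For every k ∈ {0,…,T}, the matrix Π_k defined by the backward Riccati recursion is symmetric positive semidefinite. -/

import Mathlib

open Matrix Filter Topology

/-- The unique symmetric positive semidefinite square root of a positive
semidefinite real matrix (junk value `0` if the matrix is not PSD). -/
noncomputable def msqrt {d : ℕ} (X : Matrix (Fin d) (Fin d) ℝ) :
    Matrix (Fin d) (Fin d) ℝ :=
  letI := Classical.propDecidable X.PosSemidef
  if h : X.PosSemidef then
    (h.1.eigenvectorUnitary : Matrix (Fin d) (Fin d) ℝ) *
      diagonal ((↑) ∘ (h.1.eigenvalues · |>.sqrt)) *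
      (star h.1.eigenvectorUnitary : Matrix (Fin d) (Fin d) ℝ)
  else 0

/-- The Frobenius norm of a real square matrix. -/
noncomputable def frob {d : ℕ} (X : Matrix (Fin d) (Fin d) ℝ) : ℝ :=
  Real.sqrt (∑ i, ∑ j, X i j ^ 2)

/-- Data of the mutual information optimal control problem for a discrete-time
linear system `x_{k+1} = A_k x_k + B_k u_k + w_k`. -/
structure LQData (n m : ℕ) where
  ε : ℝ
  A : ℕ → Matrix (Fin n) (Fin n) ℝ
  B : ℕ → Matrix (Fin n) (Fin m) ℝ
  R : ℕ → Matrix (Fin m) (Fin m) ℝ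
  F : Matrix (Fin n) (Fin n) ℝ
  Sw : ℕ → Matrix (Fin n) (Fin n) ℝ
  Sini : Matrix (Fin n) (Fin n) ℝ

namespace LQData

variable {n m : ℕ} (P : LQData n m) (T : ℕ) (Srho : ℕ → Matrix (Fin m) (Fin m) ℝ)

/-- The backward Riccati recursion `Π_k` associated with the prior covariances
`Σ_{ρ_k}`: `Π_T = F` and
`Π_k = A_kᵀ Π_{k+1} A_k − (1/ε) A_kᵀ Π_{k+1} B_k Σ^{1/2} (I + Σ^{1/2} C_k Σ^{1/2})⁻¹ Σ^{1/2} B_kᵀ Π_{k+1} A_k`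
with `C_k = (R_k + B_kᵀ Π_{k+1} B_k)/ε`. -/
noncomputable def Ric (k : ℕ) : Matrix (Fin n) (Fin n) ℝ :=
  if h : T ≤ k then P.F
  else
    let Pk := Ric (k + 1)
    let S := msqrt (Srho k)
    let C := (1 / P.ε) • (P.R k + (P.B k)ᵀ * Pk * P.B k)
    (P.A k)ᵀ * Pk * P.A k -
      (1 / P.ε) • ((P.A k)ᵀ * Pk * P.B k * S * (1 + S * C * S)⁻¹ * S * (P.B k)ᵀ * Pk * P.A k)
termination_by T - k
decreasing_by omega

/-- `C_k = (R_k + B_kᵀ Π_{k+1} B_k)/ε`. -/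
noncomputable def Ck (k : ℕ) : Matrix (Fin m) (Fin m) ℝ :=
  (1 / P.ε) • (P.R k + (P.B k)ᵀ * P.Ric T Srho (k + 1) * P.B k)

/-- `Σ_{Q_k} = ε (R_k + B_kᵀ Π_{k+1} B_k)⁻¹`. -/
noncomputable def SigQ (k : ℕ) : Matrix (Fin m) (Fin m) ℝ :=
  P.ε • (P.R k + (P.B k)ᵀ * P.Ric T Srho (k + 1) * P.B k)⁻¹

/-- Covariance `Σ_{π_k}` of the optimal policy for the fixed prior. -/
noncomputable def SigPi (k : ℕ) : Matrix (Fin m) (Fin m) ℝ :=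
  msqrt (Srho k) * (1 + msqrt (Srho k) * P.Ck T Srho k * msqrt (Srho k))⁻¹ * msqrt (Srho k)

/-- Feedback gain `P_k = −(1/ε) Σ_{π_k} B_kᵀ Π_{k+1} A_k`. -/
noncomputable def Pgain (k : ℕ) : Matrix (Fin m) (Fin n) ℝ :=
  -((1 / P.ε) • (P.SigPi T Srho k * (P.B k)ᵀ * P.Ric T Srho (k + 1) * P.A k))

/-- Forward state covariance recursion under the optimal policy. -/
noncomputable def Sigx : ℕ → Matrix (Fin n) (Fin n) ℝ
  | 0 => P.Sini
  | k + 1 =>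
    (P.A k + P.B k * P.Pgain T Srho k) * Sigx k *
        (P.A k + P.B k * P.Pgain T Srho k)ᵀ +
      P.B k * P.SigPi T Srho k * (P.B k)ᵀ + P.Sw k

/-- The standard LQR Riccati recursion `Π̌_k`. -/
noncomputable def RicLQR (k : ℕ) : Matrix (Fin n) (Fin n) ℝ :=
  if h : T ≤ k then P.F
  else
    let Pk := RicLQR (k + 1)
    (P.A k)ᵀ * Pk * P.A k -
      (P.A k)ᵀ * Pk * P.B k * (P.R k + (P.B k)ᵀ * Pk * P.B k)⁻¹ * (P.B k)ᵀ * Pk * P.A k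
termination_by T - k
decreasing_by omega

/-- `Π̂_k = A_kᵀ ⋯ A_{T−1}ᵀ F A_{T−1} ⋯ A_k`. -/
noncomputable def RicHat (k : ℕ) : Matrix (Fin n) (Fin n) ℝ :=
  if h : T ≤ k then P.F
  else (P.A k)ᵀ * RicHat (k + 1) * P.A k
termination_by T - k
decreasing_by omega

/-- `Σ_{w_{k−1}}` with the convention `Σ_{w_{−1}} := Σ_{x_ini}`. -/
noncomputable def Swm1 (k : ℕ) : Matrix (Fin n) (Fin n) ℝ :=
  if k = 0 then P.Sini else P.Sw (k - 1)

/-- The matrix `M̌_k` from the sufficient condition for stochastic optimal policies. -/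
noncomputable def Mcheck (k : ℕ) : Matrix (Fin m) (Fin m) ℝ :=
  (P.R k + (P.B k)ᵀ * P.RicHat T (k + 1) * P.B k)⁻¹ *
      ((P.B k)ᵀ * P.RicLQR T (k + 1) * P.A k * P.Swm1 k * (P.A k)ᵀ *
        P.RicLQR T (k + 1) * P.B k) *
      (P.R k + (P.B k)ᵀ * P.RicHat T (k + 1) * P.B k)⁻¹ -
    P.ε • (P.R k + (P.B k)ᵀ * P.RicLQR T (k + 1) * P.B k)⁻¹

/-- State covariance under the zero control input. -/
noncomputable def SigxZero : ℕ → Matrix (Fin n) (Fin n) ℝ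
  | 0 => P.Sini
  | k + 1 => P.A k * SigxZero k * (P.A k)ᵀ + P.Sw k

/-- The matrix `M̂_k^zero` from the sufficient condition for deterministic optimal policies. -/
noncomputable def MhatZero (k : ℕ) : Matrix (Fin m) (Fin m) ℝ :=
  (P.R k + (P.B k)ᵀ * P.RicLQR T (k + 1) * P.B k)⁻¹ *
      ((P.B k)ᵀ * P.RicHat T (k + 1) * P.A k * P.SigxZero k * (P.A k)ᵀ *
        P.RicHat T (k + 1) * P.B k) *
      (P.R k + (P.B k)ᵀ * P.RicLQR T (k + 1) * P.B k)⁻¹ -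
    P.ε • (P.R k + (P.B k)ᵀ * P.RicHat T (k + 1) * P.B k)⁻¹


/-- The backward recursion `r_k` for the mean offset:
`r_T = 0` and `r_k = A_k⁻¹ r_{k+1} − Π_k⁻¹ A_kᵀ Π_{k+1} B_k (I + Σ_{ρ_k} C_k)⁻¹ μ_{ρ_k}`. -/
noncomputable def rvec (μ : ℕ → Fin m → ℝ) (k : ℕ) : Fin n → ℝ :=
  if h : T ≤ k then 0
  else
    ((P.A k)⁻¹).mulVec (rvec μ (k + 1)) -
      ((P.Ric T Srho k)⁻¹ * ((P.A k)ᵀ * P.Ric T Srho (k + 1) * P.B k *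
        (1 + Srho k * P.Ck T Srho k)⁻¹)).mulVec (μ k)
termination_by T - k
decreasing_by omega

/-- `Θ_k = ε C_k − ε C_k Σ_{π_k} C_k − (I − C_k Σ_{π_k}) B_kᵀ Π_{k+1} A_k Π_k⁻¹ A_kᵀ Π_{k+1} B_k (I − Σ_{π_k} C_k)`. -/
noncomputable def Theta (k : ℕ) : Matrix (Fin m) (Fin m) ℝ :=
  P.ε • P.Ck T Srho k - P.ε • (P.Ck T Srho k * P.SigPi T Srho k * P.Ck T Srho k) -
    (1 - P.Ck T Srho k * P.SigPi T Srho k) *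
      ((P.B k)ᵀ * P.Ric T Srho (k + 1) * P.A k * (P.Ric T Srho k)⁻¹ *
        ((P.A k)ᵀ * P.Ric T Srho (k + 1) * P.B k)) *
      (1 - P.SigPi T Srho k * P.Ck T Srho k)

end LQData

/-- Extend a `T`-tuple of matrices to a function on `ℕ` (by zero). -/
def extT {m : ℕ} (T : ℕ) (σ : Fin T → Matrix (Fin m) (Fin m) ℝ) :
    ℕ → Matrix (Fin m) (Fin m) ℝ :=
  fun k => if h : k < T then σ ⟨k, h⟩ else 0


/-- Extend a `T`-tuple of vectors to a function on `ℕ` (by zero). -/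
def extV {m : ℕ} (T : ℕ) (μ : Fin T → Fin m → ℝ) : ℕ → Fin m → ℝ :=
  fun k => if h : k < T then μ ⟨k, h⟩ else 0

namespace LQData

variable {n m : ℕ} (P : LQData n m) (T : ℕ)

/-- The reduced objective `J̌` as a function of the `T`-tuple of prior covariances. -/
noncomputable def Jcheck (σ : Fin T → Matrix (Fin m) (Fin m) ℝ) : ℝ :=
  (1 / 2) * ((P.Ric T (extT T σ) 0 * P.Sini).trace +
    ∑ k : Fin T,
      (P.ε * Real.log ((extT T σ k + P.SigQ T (extT T σ) k).det / (P.SigQ T (extT T σ) k).det) +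
        (P.Ric T (extT T σ) (k + 1) * P.Sw k).trace))

/-- `L_k = (Σ_{Q_k} + Σ_{ρ_k})⁻¹`. -/
noncomputable def Lmat (Srho : ℕ → Matrix (Fin m) (Fin m) ℝ) (k : ℕ) :
    Matrix (Fin m) (Fin m) ℝ :=
  (P.SigQ T Srho k + Srho k)⁻¹

/-- `E_k = (1/ε) Σ_{Q_k} B_kᵀ Π_{k+1} A_k`. -/
noncomputable def Emat (Srho : ℕ → Matrix (Fin m) (Fin m) ℝ) (k : ℕ) :
    Matrix (Fin m) (Fin n) ℝ :=
  (1 / P.ε) • (P.SigQ T Srho k * (P.B k)ᵀ * P.Ric T Srho (k + 1) * P.A k)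

/-- `J̌'_k = (ε/2) L_k (Σ_{ρ_k} + Σ_{Q_k} − E_k Σ_{x_k} E_kᵀ) L_k`. -/
noncomputable def Jprime (Srho : ℕ → Matrix (Fin m) (Fin m) ℝ) (k : ℕ) :
    Matrix (Fin m) (Fin m) ℝ :=
  (P.ε / 2) • (P.Lmat T Srho k *
    (Srho k + P.SigQ T Srho k - P.Emat T Srho k * P.Sigx T Srho k * (P.Emat T Srho k)ᵀ) *
    P.Lmat T Srho k)

/-- The alternating-optimization update map `𝒯` on `T`-tuples of prior covariances:
`𝒯(σ)_k = Σ_{π_k} + P_k Σ_{x_k} P_kᵀ`. -/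
noncomputable def Tmap (σ : Fin T → Matrix (Fin m) (Fin m) ℝ) :
    Fin T → Matrix (Fin m) (Fin m) ℝ :=
  fun k =>
    P.SigPi T (extT T σ) k +
      P.Pgain T (extT T σ) k * P.Sigx T (extT T σ) k * (P.Pgain T (extT T σ) k)ᵀ

/-- The objective `J` as a function of the prior means, for fixed prior covariances:
`J(μ) = (1/2)( r_0ᵀ Π_0 r_0 + Σ_k μ_{ρ_k}ᵀ Θ_k μ_{ρ_k} )`. -/
noncomputable def Jmean (Srho : ℕ → Matrix (Fin m) (Fin m) ℝ) (μ : Fin T → Fin m → ℝ) : ℝ :=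
  (1 / 2) *
    (P.rvec T Srho (extV T μ) 0 ⬝ᵥ (P.Ric T Srho 0).mulVec (P.rvec T Srho (extV T μ) 0) +
      ∑ k : Fin T, μ k ⬝ᵥ (P.Theta T Srho k).mulVec (μ k))

end LQData

open Matrix Filter Topology LQData


open Matrix

private lemma psd_smul' {d : ℕ} {c : ℝ} (hc : 0 ≤ c) {A : Matrix (Fin d) (Fin d) ℝ}
    (hA : A.PosSemidef) : (c • A).PosSemidef := by
  exact hA.smul hc

private lemma pd_smul' {d : ℕ} {c : ℝ} (hc : 0 < c) {A : Matrix (Fin d) (Fin d) ℝ}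
    (hA : A.PosDef) : (c • A).PosDef := by
  exact hA.smul hc

private lemma push_through1 {nn mm : ℕ}
    (K : Matrix (Fin nn) (Fin mm) ℝ) {G : Matrix (Fin mm) (Fin mm) ℝ} (hG : G.PosDef) :
    (1 - K * (G + Kᵀ * K)⁻¹ * Kᵀ).PosSemidef := by
  have hKtK : (Kᵀ * K).PosSemidef := by
    have := Matrix.posSemidef_conjTranspose_mul_self K
    rwa [conjTranspose_eq_transpose_of_trivial] at this
  have hXpd : (G + Kᵀ * K).PosDef := hG.add_posSemidef hKtK
  have hGdet : IsUnit G.det := hG.det_pos.ne'.isUnit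
  have hXdet : IsUnit (G + Kᵀ * K).det := hXpd.det_pos.ne'.isUnit
  have hGinvpd : (G⁻¹).PosDef := hG.inv
  have hKGK : (K * G⁻¹ * Kᵀ).PosSemidef := by
    have := hGinvpd.posSemidef.mul_mul_conjTranspose_same K
    rwa [conjTranspose_eq_transpose_of_trivial] at this
  have hWpd : ((1 : Matrix (Fin nn) (Fin nn) ℝ) + K * G⁻¹ * Kᵀ).PosDef :=
    Matrix.PosDef.add_posSemidef Matrix.PosDef.one hKGK
  have hkey : K * (G + Kᵀ * K)⁻¹ * Kᵀ + K * G⁻¹ * Kᵀ * (K * (G + Kᵀ * K)⁻¹ * Kᵀ) =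
      K * G⁻¹ * Kᵀ := by
    have step : K * (G⁻¹ * ((G + Kᵀ * K) * ((G + Kᵀ * K)⁻¹ * Kᵀ))) = K * (G⁻¹ * Kᵀ) := by
      rw [Matrix.mul_nonsing_inv_cancel_left _ _ hXdet]
    have step2 : K * ((G + Kᵀ * K)⁻¹ * Kᵀ) = K * (G⁻¹ * (G * ((G + Kᵀ * K)⁻¹ * Kᵀ))) := by
      rw [Matrix.nonsing_inv_mul_cancel_left _ _ hGdet]
    simp only [Matrix.mul_assoc]
    nth_rewrite 1 [step2]
    rw [← step]
    simp only [Matrix.add_mul, Matrix.mul_add, Matrix.mul_assoc]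
  have hmain : ((1 : Matrix (Fin nn) (Fin nn) ℝ) + K * G⁻¹ * Kᵀ) *
      (1 - K * (G + Kᵀ * K)⁻¹ * Kᵀ) = 1 := by
    have expand : ((1 : Matrix (Fin nn) (Fin nn) ℝ) + K * G⁻¹ * Kᵀ) *
        (1 - K * (G + Kᵀ * K)⁻¹ * Kᵀ) =
        1 + (K * G⁻¹ * Kᵀ -
          (K * (G + Kᵀ * K)⁻¹ * Kᵀ + K * G⁻¹ * Kᵀ * (K * (G + Kᵀ * K)⁻¹ * Kᵀ))) := by
      noncomm_ring
    rw [expand, hkey, sub_self, add_zero]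
  have hinv : ((1 : Matrix (Fin nn) (Fin nn) ℝ) + K * G⁻¹ * Kᵀ)⁻¹ =
      1 - K * (G + Kᵀ * K)⁻¹ * Kᵀ := Matrix.inv_eq_right_inv hmain
  rw [← hinv]
  exact hWpd.inv.posSemidef

private lemma push_through {nn mm : ℕ} {c : ℝ} (hc : 0 < c)
    (K : Matrix (Fin nn) (Fin mm) ℝ) {G : Matrix (Fin mm) (Fin mm) ℝ} (hG : G.PosDef) :
    (1 - c • (K * (G + c • (Kᵀ * K))⁻¹ * Kᵀ)).PosSemidef := by
  have hG' : (c⁻¹ • G).PosDef := pd_smul' (by positivity) hG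
  have h := push_through1 K hG'
  have hscale : (c⁻¹ • G + Kᵀ * K) = c⁻¹ • (G + c • (Kᵀ * K)) := by
    rw [smul_add, smul_smul, inv_mul_cancel₀ hc.ne', one_smul]
  have hXpd : (G + c • (Kᵀ * K)).PosDef := by
    refine hG.add_posSemidef (psd_smul' hc.le ?_)
    have := Matrix.posSemidef_conjTranspose_mul_self K
    rwa [conjTranspose_eq_transpose_of_trivial] at this
  have hXdet : IsUnit (G + c • (Kᵀ * K)).det := hXpd.det_pos.ne'.isUnit
  have hinv : (c⁻¹ • (G + c • (Kᵀ * K)))⁻¹ = c • (G + c • (Kᵀ * K))⁻¹ :=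
    Matrix.inv_eq_right_inv (by
      rw [Matrix.smul_mul, Matrix.mul_smul, smul_smul, inv_mul_cancel₀ hc.ne', one_smul,
        Matrix.mul_nonsing_inv _ hXdet])
  rw [hscale, hinv] at h
  have : K * (c • (G + c • (Kᵀ * K))⁻¹) * Kᵀ = c • (K * (G + c • (Kᵀ * K))⁻¹ * Kᵀ) := by
    rw [Matrix.mul_smul, Matrix.smul_mul]
  rwa [this] at h

open scoped MatrixOrder

theorem riccati_posSemidef {n m : ℕ} (hn : 1 ≤ n) (hm : 1 ≤ m) (T : ℕ) (hT : 1 ≤ T)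
    (P : LQData n m) (hε : 0 < P.ε)
    (hR : ∀ k < T, (P.R k).PosDef) (hSw : ∀ k < T, (P.Sw k).PosDef)
    (hF : P.F.PosDef) (hSini : P.Sini.PosDef)
    (Srho : ℕ → Matrix (Fin m) (Fin m) ℝ) (hSrho : ∀ k < T, (Srho k).PosSemidef) :
    ∀ k ≤ T, (P.Ric T Srho k).PosSemidef := by
  suffices key : ∀ d k, T - k = d → (P.Ric T Srho k).PosSemidef by
    intro k _
    exact key (T - k) k rfl
  intro d
  induction d with
  | zero =>
    intro k hd
    have hkT : T ≤ k := by omega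
    rw [LQData.Ric, dif_pos hkT]
    exact hF.posSemidef
  | succ d ih =>
    intro k hd
    have hkT : ¬ T ≤ k := by omega
    have hk : k < T := by omega
    have hPi : (P.Ric T Srho (k + 1)).PosSemidef := ih (k + 1) (by omega)
    rw [LQData.Ric]
    simp only [dif_neg hkT]
    set Pi := P.Ric T Srho (k + 1) with hPidef
    set A := P.A k
    set B := P.B k
    set R := P.R k
    set c : ℝ := 1 / P.ε with hcdef
    have hc : 0 < c := by positivity
    set S := msqrt (Srho k) with hSdef
    have hSt : Sᵀ = S := by
      rw [hSdef, msqrt, dif_pos (hSrho k hk), ← conjTranspose_eq_transpose_of_trivial]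
      have := isHermitian_mul_mul_conjTranspose
        ((hSrho k hk).1.eigenvectorUnitary : Matrix (Fin m) (Fin m) ℝ)
        (isHermitian_diagonal (((↑) ∘ ((hSrho k hk).1.eigenvalues · |>.sqrt)) : Fin m → ℝ))
      rw [star_eq_conjTranspose]
      exact this
    set S1 := CFC.sqrt Pi with hS1def
    have hS1t : S1ᵀ = S1 := by
      rw [hS1def, ← conjTranspose_eq_transpose_of_trivial]
      exact (Matrix.nonneg_iff_posSemidef.mp (CFC.sqrt_nonneg Pi)).1
    have hS1sq : ∀ M : Matrix (Fin n) (Fin n) ℝ, S1 * (S1 * M) = Pi * M := by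
      intro M
      rw [← Matrix.mul_assoc, CFC.sqrt_mul_sqrt_self Pi hPi.nonneg]
    have hS1sqm : ∀ M : Matrix (Fin n) (Fin m) ℝ, S1 * (S1 * M) = Pi * M := by
      intro M
      rw [← Matrix.mul_assoc, CFC.sqrt_mul_sqrt_self Pi hPi.nonneg]
    have hSRS : (S * R * S).PosSemidef := by
      have := (hR k hk).posSemidef.conjTranspose_mul_mul_same S
      rwa [conjTranspose_eq_transpose_of_trivial, hSt] at this
    have hGpd : ((1 : Matrix (Fin m) (Fin m) ℝ) + c • (S * R * S)).PosDef :=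
      Matrix.PosDef.add_posSemidef Matrix.PosDef.one (psd_smul' hc.le hSRS)
    set K := S1 * B * S with hKdef
    have hX : (1 : Matrix (Fin m) (Fin m) ℝ) + S * (c • (R + Bᵀ * Pi * B)) * S =
        (1 + c • (S * R * S)) + c • (Kᵀ * K) := by
      rw [hKdef]
      simp only [Matrix.transpose_mul, hSt, hS1t, Matrix.mul_smul, Matrix.smul_mul,
        Matrix.mul_add, Matrix.add_mul, smul_add, Matrix.mul_assoc, hS1sq, hS1sqm]
      rw [add_assoc]
    have hPT := push_through hc K hGpd
    rw [← hX] at hPT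
    have hconj := hPT.conjTranspose_mul_mul_same (S1 * A)
    rw [conjTranspose_eq_transpose_of_trivial] at hconj
    have hmain : Aᵀ * Pi * A -
        c • (Aᵀ * Pi * B * S * (1 + S * (c • (R + Bᵀ * Pi * B)) * S)⁻¹ * S * Bᵀ * Pi * A) =
        (S1 * A)ᵀ *
          (1 - c • (K * (1 + S * (c • (R + Bᵀ * Pi * B)) * S)⁻¹ * Kᵀ)) * (S1 * A) := by
      rw [hKdef]
      simp only [Matrix.transpose_mul, hSt, hS1t, Matrix.mul_sub, Matrix.sub_mul,
        Matrix.mul_one, Matrix.one_mul, Matrix.mul_smul, Matrix.smul_mul,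
        Matrix.mul_assoc, hS1sq, hS1sqm]
    rw [hmain]
    exact hconj
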